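/- Every group homomorphism from the alternating group A₆ to the general linear group GL(2,ℂ) is trivial, i.e., it sends every element to the identity matrix. In particular, A₆ has no non-trivial two-dimensional complex linear representation. -/

import Mathlib

open Matrix

private lemma mat_invol (A : Matrix (Fin 2) (Fin 2) ℂ) (h : A * A = 1) (hd : A.det = 1) :
    A = 1 ∨ A = -1 := by
  have h00 := congrFun (congrFun h 0) 0
  have h01 := congrFun (congrFun h 0) 1
  have h10 := congrFun (congrFun h 1) 0
  have h11 := congrFun (congrFun h 1) 1
  simp [Matrix.mul_apply, Fin.sum_univ_two, Matrix.one_apply] at h00 h01 h10 h11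
  rw [Matrix.det_fin_two] at hd
  by_cases hs : A 0 0 + A 1 1 = 0
  · exfalso
    have h2 : (2 : ℂ) = 0 := by linear_combination -h00 - hd + A 0 0 * hs
    norm_num at h2
  · have hb : A 0 1 = 0 := by
      have hb' : A 0 1 * (A 0 0 + A 1 1) = 0 := by linear_combination h01
      rcases mul_eq_zero.1 hb' with h | h
      · exact h
      · exact absurd h hs
    have hc : A 1 0 = 0 := by
      have hc' : A 1 0 * (A 0 0 + A 1 1) = 0 := by linear_combination h10
      rcases mul_eq_zero.1 hc' with h | h
      · exact h
      · exact absurd h hs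
    have ha : A 0 0 = 1 ∨ A 0 0 = -1 := by
      apply mul_self_eq_one_iff.1
      linear_combination h00 - A 1 0 * hb
    rcases ha with ha | ha
    · left
      have hdd : A 1 1 = 1 := by linear_combination hd - A 1 1 * ha + A 1 0 * hb
      ext i j
      fin_cases i <;> fin_cases j <;> simp [ha, hb, hc, hdd, Matrix.one_apply]
    · right
      have hdd : A 1 1 = -1 := by linear_combination -hd + A 1 1 * ha - A 1 0 * hb
      ext i j
      fin_cases i <;> fin_cases j <;>
        simp [ha, hb, hc, hdd, Matrix.one_apply, Matrix.neg_apply]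

private lemma gl_invol (u : GL (Fin 2) ℂ) (h : u * u = 1)
    (hd : Matrix.GeneralLinearGroup.det u = 1) : u = 1 ∨ u = -1 := by
  have h' : (u : Matrix (Fin 2) (Fin 2) ℂ) * (u : Matrix (Fin 2) (Fin 2) ℂ) = 1 := by
    rw [← Units.val_mul, h, Units.val_one]
  have hd' : (u : Matrix (Fin 2) (Fin 2) ℂ).det = 1 := by
    have := congrArg Units.val hd
    simpa using this
  rcases mat_invol _ h' hd' with h1 | h1
  · left
    ext
    rw [h1, Units.val_one]
  · right
    ext
    rw [h1, Units.val_neg, Units.val_one]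

private lemma gl_negOne_ne_one : (-1 : GL (Fin 2) ℂ) ≠ 1 := by
  intro h
  have := congrArg (fun u : GL (Fin 2) ℂ => (u : Matrix (Fin 2) (Fin 2) ℂ) 0 0) h
  simp at this
  norm_num at this

open Equiv Equiv.Perm commutatorElement in
/-- Every group homomorphism from the alternating group `A₆` (the Valentiner group)
to `GL(2, ℂ)` is trivial: it sends every element to the identity. In particular, `A₆`
has no non-trivial two-dimensional complex linear representation. -/
theorem A6_hom_GL2_trivial
    (φ : alternatingGroup (Fin 6) →* GL (Fin 2) ℂ) :
    ∀ g : alternatingGroup (Fin 6), φ g = 1 := by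
  -- helper : if a ∈ A₆ is an involution which is a commutator, then φ a = ±1
  have key : ∀ a : alternatingGroup (Fin 6), a * a = 1 → (∃ x y : alternatingGroup (Fin 6), a = ⁅x, y⁆) →
      φ a = 1 ∨ φ a = -1 := by
    rintro a ha ⟨x, y, rfl⟩
    apply gl_invol
    · rw [← _root_.map_mul, ha, _root_.map_one]
    · rw [_root_.map_commutatorElement, _root_.map_commutatorElement]
      exact commutatorElement_eq_one_iff_mul_comm.2 (mul_comm _ _)
  -- the concrete permutations
  set p : Equiv.Perm (Fin 6) := Equiv.swap 0 1 * Equiv.swap 3 4 with hp_def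
  set q : Equiv.Perm (Fin 6) := Equiv.swap 1 2 * Equiv.swap 3 4 with hq_def
  set t₀ : Equiv.Perm (Fin 6) := Equiv.swap 1 0 * Equiv.swap 1 2 with ht_def
  have hpmem : p ∈ alternatingGroup (Fin 6) := by
    rw [Equiv.Perm.mem_alternatingGroup]; decide
  have hqmem : q ∈ alternatingGroup (Fin 6) := by
    rw [Equiv.Perm.mem_alternatingGroup]; decide
  have ht3 : Equiv.Perm.IsThreeCycle t₀ :=
    Equiv.Perm.isThreeCycle_swap_mul_swap_same (by decide) (by decide) (by decide)
  have htmem : t₀ ∈ alternatingGroup (Fin 6) := ht3.mem_alternatingGroup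
  -- commutator witnesses
  set xp : Equiv.Perm (Fin 6) := Equiv.swap 2 5 * Equiv.swap 3 4 with hxp_def
  set yp : Equiv.Perm (Fin 6) :=
    Equiv.swap 0 3 * Equiv.swap 3 2 * (Equiv.swap 1 4 * Equiv.swap 4 5) with hyp_def
  set xq : Equiv.Perm (Fin 6) := Equiv.swap 2 3 * Equiv.swap 3 4 with hxq_def
  set yq : Equiv.Perm (Fin 6) := Equiv.swap 1 3 * Equiv.swap 3 2 with hyq_def
  have hxpmem : xp ∈ alternatingGroup (Fin 6) := by
    rw [Equiv.Perm.mem_alternatingGroup]; decide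
  have hypmem : yp ∈ alternatingGroup (Fin 6) := by
    rw [Equiv.Perm.mem_alternatingGroup]; decide
  have hxqmem : xq ∈ alternatingGroup (Fin 6) := by
    rw [Equiv.Perm.mem_alternatingGroup]; decide
  have hyqmem : yq ∈ alternatingGroup (Fin 6) := by
    rw [Equiv.Perm.mem_alternatingGroup]; decide
  -- φ of p and q is ±1
  have hφp : φ ⟨p, hpmem⟩ = 1 ∨ φ ⟨p, hpmem⟩ = -1 := by
    apply key
    · apply Subtype.ext
      show p * p = 1
      decide
    · refine ⟨⟨xp, hxpmem⟩, ⟨yp, hypmem⟩, ?_⟩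
      apply Subtype.ext
      show p = xp * yp * xp⁻¹ * yp⁻¹
      decide
  have hφq : φ ⟨q, hqmem⟩ = 1 ∨ φ ⟨q, hqmem⟩ = -1 := by
    apply key
    · apply Subtype.ext
      show q * q = 1
      decide
    · refine ⟨⟨xq, hxqmem⟩, ⟨yq, hyqmem⟩, ?_⟩
      apply Subtype.ext
      show q = xq * yq * xq⁻¹ * yq⁻¹
      decide
  -- φ of the 3-cycle t₀ is 1
  have hφt : φ ⟨t₀, htmem⟩ = 1 := by
    have hmul : (⟨t₀, htmem⟩ : alternatingGroup (Fin 6)) = ⟨p, hpmem⟩ * ⟨q, hqmem⟩ := by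
      apply Subtype.ext
      show t₀ = p * q
      decide
    have hcube : φ ⟨t₀, htmem⟩ ^ 3 = 1 := by
      rw [← _root_.map_pow]
      have : (⟨t₀, htmem⟩ : alternatingGroup (Fin 6)) ^ 3 = 1 := by
        apply Subtype.ext
        show t₀ ^ 3 = 1
        decide
      rw [this, _root_.map_one]
    have hmul' : φ ⟨t₀, htmem⟩ = φ ⟨p, hpmem⟩ * φ ⟨q, hqmem⟩ := by rw [hmul, _root_.map_mul]
    rcases hφp with h1 | h1 <;> rcases hφq with h2 | h2
    · rw [hmul', h1, h2, mul_one]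
    · exfalso
      rw [hmul', h1, h2, one_mul] at hcube
      rw [pow_succ, neg_one_sq, one_mul] at hcube
      exact gl_negOne_ne_one hcube
    · exfalso
      rw [hmul', h1, h2, mul_one] at hcube
      rw [pow_succ, neg_one_sq, one_mul] at hcube
      exact gl_negOne_ne_one hcube
    · rw [hmul', h1, h2, neg_mul_neg, one_mul]
  -- φ kills every 3-cycle
  have h3cyc : ∀ (σ : Equiv.Perm (Fin 6)) (h : Equiv.Perm.IsThreeCycle σ),
      φ ⟨σ, h.mem_alternatingGroup⟩ = 1 := by
    intro σ hσ
    have hconj : IsConj (⟨t₀, htmem⟩ : alternatingGroup (Fin 6))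
        (⟨σ, hσ.mem_alternatingGroup⟩ : alternatingGroup (Fin 6)) :=
      alternatingGroup.isThreeCycle_isConj (by simp) ht3 hσ
    obtain ⟨c, hc⟩ := isConj_iff.1 hconj
    rw [← hc, _root_.map_mul, _root_.map_mul, hφt, mul_one, _root_.map_inv, mul_inv_cancel]
  -- closure induction over 3-cycles
  intro g
  have hg : (g : Equiv.Perm (Fin 6)) ∈
      Subgroup.closure { σ : Equiv.Perm (Fin 6) | Equiv.Perm.IsThreeCycle σ } := by
    rw [Equiv.Perm.closure_three_cycles_eq_alternating]
    exact g.2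
  have main : ∀ (x : Equiv.Perm (Fin 6))
      (_ : x ∈ Subgroup.closure { σ : Equiv.Perm (Fin 6) | Equiv.Perm.IsThreeCycle σ }),
      ∀ hx : x ∈ alternatingGroup (Fin 6), φ ⟨x, hx⟩ = 1 := by
    intro x hx
    induction hx using Subgroup.closure_induction with
    | mem z hz => intro hz'; exact h3cyc z hz
    | one =>
      intro h1
      have : (⟨(1 : Equiv.Perm (Fin 6)), h1⟩ : alternatingGroup (Fin 6)) = 1 := rfl
      rw [this, _root_.map_one]
    | mul a b ha hb iha ihb =>
      intro hab
      have ha' : a ∈ alternatingGroup (Fin 6) := by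
        rwa [← Equiv.Perm.closure_three_cycles_eq_alternating]
      have hb' : b ∈ alternatingGroup (Fin 6) := by
        rwa [← Equiv.Perm.closure_three_cycles_eq_alternating]
      have : (⟨a * b, hab⟩ : alternatingGroup (Fin 6)) = ⟨a, ha'⟩ * ⟨b, hb'⟩ := rfl
      rw [this, _root_.map_mul, iha ha', ihb hb', mul_one]
    | inv a ha iha =>
      intro hainv
      have ha' : a ∈ alternatingGroup (Fin 6) := by
        rwa [← Equiv.Perm.closure_three_cycles_eq_alternating]
      have : (⟨a⁻¹, hainv⟩ : alternatingGroup (Fin 6)) = (⟨a, ha'⟩)⁻¹ := rfl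
      rw [this, _root_.map_inv, iha ha', inv_one]
  have := main g hg g.2
  simpa using this
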